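/- For any integer r ≥ 2 and integers m1, m2, m3, m4 with 0 ≤ m_i ≤ r-2 for all i and m1+m2+m3+m4 = 2r-2, the following identity holds: the sum over i=1..4 of m_i(r-2-m_i)/(2r²), plus the three terms [r-1-(χ+1)(r-1-χ)]/(2r²) where χ ranges over χ_{12,34} = min(m1+m2, m3+m4), χ_{13,24} = min(m1+m3, m2+m4), and χ_{14,23} = min(m1+m4, m2+m3), equals (1/r)·min over i of min(m_i, r-1-m_i). -/

import Mathlib

set_option maxHeartbeats 1600000


/-- the four-point correlator identity for the r-spin CFT in genus zero. -/
theorem rspin_four_point_identity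
    (r m1 m2 m3 m4 : ℤ) (hr : 2 ≤ r)
    (h1 : 0 ≤ m1 ∧ m1 ≤ r - 2) (h2 : 0 ≤ m2 ∧ m2 ≤ r - 2)
    (h3 : 0 ≤ m3 ∧ m3 ≤ r - 2) (h4 : 0 ≤ m4 ∧ m4 ≤ r - 2)
    (hsum : m1 + m2 + m3 + m4 = 2 * r - 2) :
    ((m1 * (r - 2 - m1) + m2 * (r - 2 - m2) + m3 * (r - 2 - m3) + m4 * (r - 2 - m4) : ℤ) : ℚ)
        / (2 * (r : ℚ) ^ 2)
      + ((r - 1 - (min (m1 + m2) (m3 + m4) + 1) * (r - 1 - min (m1 + m2) (m3 + m4)) : ℤ) : ℚ)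
        / (2 * (r : ℚ) ^ 2)
      + ((r - 1 - (min (m1 + m3) (m2 + m4) + 1) * (r - 1 - min (m1 + m3) (m2 + m4)) : ℤ) : ℚ)
        / (2 * (r : ℚ) ^ 2)
      + ((r - 1 - (min (m1 + m4) (m2 + m3) + 1) * (r - 1 - min (m1 + m4) (m2 + m3)) : ℤ) : ℚ)
        / (2 * (r : ℚ) ^ 2)
      = (1 / (r : ℚ)) *
        ((min (min (min m1 (r - 1 - m1)) (min m2 (r - 1 - m2)))
              (min (min m3 (r - 1 - m3)) (min m4 (r - 1 - m4))) : ℤ) : ℚ) := by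
  obtain ⟨h1a, h1b⟩ := h1
  obtain ⟨h2a, h2b⟩ := h2
  obtain ⟨h3a, h3b⟩ := h3
  obtain ⟨h4a, h4b⟩ := h4
  set M : ℤ := min (min (min m1 (r - 1 - m1)) (min m2 (r - 1 - m2)))
      (min (min m3 (r - 1 - m3)) (min m4 (r - 1 - m4))) with hM
  -- combinatorial fact: sum of the three "defects" equals r - 1 - 2M
  have hcomb : (r - 1 - min (m1 + m2) (m3 + m4)) + (r - 1 - min (m1 + m3) (m2 + m4))
      + (r - 1 - min (m1 + m4) (m2 + m3)) = r - 1 - 2 * M := by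
    rw [hM]; omega
  -- algebraic identity (quadratic part)
  have hquad : (m1 * (r - 2 - m1) + m2 * (r - 2 - m2) + m3 * (r - 2 - m3) + m4 * (r - 2 - m4))
      + (r - 1 - (min (m1 + m2) (m3 + m4) + 1) * (r - 1 - min (m1 + m2) (m3 + m4)))
      + (r - 1 - (min (m1 + m3) (m2 + m4) + 1) * (r - 1 - min (m1 + m3) (m2 + m4)))
      + (r - 1 - (min (m1 + m4) (m2 + m3) + 1) * (r - 1 - min (m1 + m4) (m2 + m3)))
      = r * (r - 1) - r * ((r - 1 - min (m1 + m2) (m3 + m4))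
          + (r - 1 - min (m1 + m3) (m2 + m4)) + (r - 1 - min (m1 + m4) (m2 + m3))) := by
    obtain rfl : m4 = 2 * r - 2 - m1 - m2 - m3 := by omega
    rcases le_total (m1 + m2) (m3 + (2 * r - 2 - m1 - m2 - m3)) with h | h <;>
      rcases le_total (m1 + m3) (m2 + (2 * r - 2 - m1 - m2 - m3)) with h' | h' <;>
      rcases le_total (m1 + (2 * r - 2 - m1 - m2 - m3)) (m2 + m3) with h'' | h'' <;>
      simp only [min_eq_left, min_eq_right, min_eq_left h, min_eq_right h,
        min_eq_left h', min_eq_right h', min_eq_left h'', min_eq_right h''] <;> ring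
  have hkey : (m1 * (r - 2 - m1) + m2 * (r - 2 - m2) + m3 * (r - 2 - m3) + m4 * (r - 2 - m4))
      + (r - 1 - (min (m1 + m2) (m3 + m4) + 1) * (r - 1 - min (m1 + m2) (m3 + m4)))
      + (r - 1 - (min (m1 + m3) (m2 + m4) + 1) * (r - 1 - min (m1 + m3) (m2 + m4)))
      + (r - 1 - (min (m1 + m4) (m2 + m3) + 1) * (r - 1 - min (m1 + m4) (m2 + m3)))
      = 2 * r * M := by
    rw [hquad, hcomb]; ring
  have hr0 : (r : ℚ) ≠ 0 := by
    exact_mod_cast (by omega : r ≠ 0)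
  have hkeyQ : ((m1 * (r - 2 - m1) + m2 * (r - 2 - m2) + m3 * (r - 2 - m3)
        + m4 * (r - 2 - m4) : ℤ) : ℚ)
      + ((r - 1 - (min (m1 + m2) (m3 + m4) + 1) * (r - 1 - min (m1 + m2) (m3 + m4)) : ℤ) : ℚ)
      + ((r - 1 - (min (m1 + m3) (m2 + m4) + 1) * (r - 1 - min (m1 + m3) (m2 + m4)) : ℤ) : ℚ)
      + ((r - 1 - (min (m1 + m4) (m2 + m3) + 1) * (r - 1 - min (m1 + m4) (m2 + m3)) : ℤ) : ℚ)
      = 2 * (r : ℚ) * (M : ℚ) := by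
    have := congrArg (fun z : ℤ => (z : ℚ)) hkey
    push_cast at this ⊢
    linarith [this]
  rw [← add_div, ← add_div, ← add_div, hkeyQ]
  field_simp
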